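/- For g = (√5−1)/2 < α ≤ 1, let K be defined by 2K+1 = d_α(φ_α(α)) where φ_α(α) = 1/α − 1 (assume φ_α(α) > 0), and let L be defined by 2L+1 = d_α(|φ_α(α−2)|) where φ_α(α−2) = 1/(2−α) − 1. Then L = K + 1; equivalently d_α(φ_α(α)) = d_α(−φ_α(α−2)) − 2. -/
import Mathlib


/-- The digit function of the α-OCF Gauss map. -/
noncomputable def dA (α x : ℝ) : ℤ := 2 * ⌊1/(2*|x|) + (1-α)/2⌋ + 1

/-- For g < α ≤ 1, with φ_α(α) = 1/α − 1 > 0 and φ_α(α−2) = 1/(2−α) − 1: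
d_α(φ_α(α)) = d_α(−φ_α(α−2)) − 2. -/
theorem stmt5 (α : ℝ) (h1 : (Real.sqrt 5 - 1)/2 < α) (h2 : α ≤ 1)
    (hpos : 0 < 1/α - 1) :
    dA α (1/α - 1) = dA α (-(1/(2-α) - 1)) - 2 := by
  have h5 : (1:ℝ) ≤ Real.sqrt 5 := by
    rw [show (1:ℝ) = Real.sqrt 1 from Real.sqrt_one.symm]
    exact Real.sqrt_le_sqrt (by norm_num)
  have hα : 0 < α := by linarith
  have hmul : α * (1/α - 1) = 1 - α := by field_simp
  have hα1 : α < 1 := by nlinarith [mul_pos hα hpos]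
  have h2a : (1:ℝ) < 2 - α := by linarith
  have hy0 : 0 < -(1/(2-α) - 1) := by
    have : 1/(2-α) < 1 := (div_lt_one (by linarith)).mpr h2a
    linarith
  have key : 1/(2*(-(1/(2-α) - 1))) + (1-α)/2 = (1/(2*(1/α - 1)) + (1-α)/2) + 1 := by
    have hne1 : α ≠ 0 := ne_of_gt hα
    have hne2 : (2:ℝ) - α ≠ 0 := by linarith
    have hd : (2:ℝ)*(1-α) ≠ 0 := by
      have : (0:ℝ) < 2*(1-α) := by nlinarith
      exact ne_of_gt this
    have e1 : 2*(-(1/(2-α) - 1)) = (2*(1-α))/(2-α) := by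
      field_simp
      ring
    have e2 : 2*(1/α - 1) = (2*(1-α))/α := by
      field_simp
    rw [e1, e2, one_div_div, one_div_div]
    have e3 : (2-α) = α + 2*(1-α) := by ring
    rw [e3, add_div, div_self hd]
    ring_nf
  unfold dA
  rw [abs_of_pos hpos, abs_of_pos hy0, key, Int.floor_add_one]
  push_cast
  ring
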